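/- Lemma (orbit form of subgroups generated by one coordinate copy and a subgroup of the acting group). Let H be a subgroup of G and x₀ ∈ V. Then the subgroup of Γ = (V → ZMod n) ⋊ G generated by C_{x₀} together with {(0, h) : h ∈ H} equals {(w, h) ∈ Γ : h ∈ H and w(i) = 0 for every i ∈ V not in the orbit of x₀ under π(H)}. In particular, if π(G) acts transitively on V, then the subgroup of Γ generated by C_{x₀} and {(0, g) : g ∈ G} is all of Γ. -/

import Mathlib

/-- The coordinate-permuting action on a direct power of a group: `(φ·σ)_i = σ_{φ⁻¹ i}`. -/
def permPi (v : ℕ) (G : Type*) [Group G] : Equiv.Perm (Fin v) →* MulAut (Fin v → G) where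
  toFun φ :=
    { toFun := fun σ i => σ (φ⁻¹ i)
      invFun := fun σ i => σ (φ i)
      left_inv := fun σ => by funext i; simp
      right_inv := fun σ => by funext i; simp
      map_mul' := fun σ τ => rfl }
  map_one' := by ext σ i; simp
  map_mul' := fun φ ψ => by ext σ i; simp [mul_inv_rev]

section

variable {G : Type*} [Group G] (n v : ℕ) (π : G →* Equiv.Perm (Fin v))

/-- The semidirect product `Γ = (V → ZMod n) ⋊ G`, where `g ∈ G` acts on functions by
`(g·w)(i) = w(π(g)⁻¹ i)`.  (The additive group `ZMod n` is written multiplicatively.) -/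
abbrev GammaSDP := (Fin v → Multiplicative (ZMod n))
  ⋊[(permPi v (Multiplicative (ZMod n))).comp π] G

/-- The canonical copy `C_x` of `ZMod n` at coordinate `x`:
the subgroup `{(w, 1) : w i = 0 for all i ≠ x}` of `Γ`. -/
def coordCopy (x : Fin v) : Subgroup (GammaSDP n v π) where
  carrier := {p | p.right = 1 ∧ ∀ i, i ≠ x → Multiplicative.toAdd (p.left i) = 0}
  one_mem' := by
    refine ⟨rfl, fun i _ => ?_⟩
    simp [SemidirectProduct.one_left]
  mul_mem' := by
    rintro p q ⟨hp1, hp2⟩ ⟨hq1, hq2⟩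
    refine ⟨by simp [SemidirectProduct.mul_right, hp1, hq1], fun i hi => ?_⟩
    have h : (p * q).left i = p.left i *
        (((permPi v (Multiplicative (ZMod n))).comp π) p.right q.left) i := rfl
    rw [h]
    have h2 : (((permPi v (Multiplicative (ZMod n))).comp π) p.right q.left) i
        = q.left ((π p.right)⁻¹ i) := rfl
    rw [h2, hp1]
    simp only [map_one]
    have h3 : ((1 : Equiv.Perm (Fin v)))⁻¹ i = i := rfl
    rw [h3, toAdd_mul, hp2 i hi, hq2 i hi, add_zero]
  inv_mem' := by
    rintro p ⟨hp1, hp2⟩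
    refine ⟨by simp [SemidirectProduct.inv_right, hp1], fun i hi => ?_⟩
    have h : (p⁻¹).left i = ((((permPi v (Multiplicative (ZMod n))).comp π) p.right⁻¹)
        p.left⁻¹) i := rfl
    rw [h]
    have h2 : ((((permPi v (Multiplicative (ZMod n))).comp π) p.right⁻¹) p.left⁻¹) i
        = (p.left ((π p.right⁻¹)⁻¹ i))⁻¹ := rfl
    rw [h2, hp1]
    simp [hp2 i hi]

variable (x₀ : Fin v)

/-- The subgroup of pairs `(w, h)` with `h ∈ H` and `w` supported on the orbit of `x₀`. -/
def orbitSupp (H : Subgroup G) : Subgroup (GammaSDP n v π) where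
  carrier := {p | p.right ∈ H ∧ ∀ i : Fin v, (¬ ∃ h ∈ H, π h x₀ = i) →
      Multiplicative.toAdd (p.left i) = 0}
  one_mem' := ⟨H.one_mem, fun i _ => by simp [SemidirectProduct.one_left]⟩
  mul_mem' := by
    rintro p q ⟨hp1, hp2⟩ ⟨hq1, hq2⟩
    refine ⟨by simpa [SemidirectProduct.mul_right] using H.mul_mem hp1 hq1, fun i hi => ?_⟩
    have h : (p * q).left i = p.left i * q.left ((π p.right)⁻¹ i) := rfl
    rw [h, toAdd_mul, hp2 i hi, hq2 _ ?_, add_zero]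
    rintro ⟨h', hh', hπ⟩
    exact hi ⟨p.right * h', H.mul_mem hp1 hh', by
      rw [map_mul, Equiv.Perm.mul_apply, hπ, ← Equiv.Perm.mul_apply, mul_inv_cancel, Equiv.Perm.one_apply]⟩
  inv_mem' := by
    rintro p ⟨hp1, hp2⟩
    refine ⟨by simpa [SemidirectProduct.inv_right] using H.inv_mem hp1, fun i hi => ?_⟩
    have h : (p⁻¹).left i = (p.left ((π p.right⁻¹)⁻¹ i))⁻¹ := rfl
    rw [h, toAdd_inv, hp2 _ ?_, neg_zero]
    rintro ⟨h', hh', hπ⟩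
    refine hi ⟨p.right⁻¹ * h', H.mul_mem (H.inv_mem hp1) hh', ?_⟩
    rw [map_mul, Equiv.Perm.mul_apply, hπ]
    simp

/-- Lemma: orbit form of the subgroup of `Γ = (V → ZMod n) ⋊ G` generated by the coordinate
copy `C_{x₀}` of `ZMod n` together with a subgroup `H ≤ G`: it consists exactly of the pairs
`(w, h)` with `h ∈ H` and `w` supported on the orbit of `x₀` under `π(H)`.  In particular, if
`π(G)` is transitive on `V`, then `C_{x₀}` and `G` generate all of `Γ`. -/
theorem coordCopy_sup_subgroup (hn : 2 ≤ n) (hv : 1 ≤ v) (H : Subgroup G) :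
    (∀ p : GammaSDP n v π,
      p ∈ coordCopy n v π x₀ ⊔ Subgroup.map SemidirectProduct.inr H ↔
        (p.right ∈ H ∧ ∀ i : Fin v, (¬ ∃ h ∈ H, π h x₀ = i) →
          Multiplicative.toAdd (p.left i) = 0)) ∧
    ((∀ x y : Fin v, ∃ g : G, π g x = y) →
      coordCopy n v π x₀ ⊔ Subgroup.map SemidirectProduct.inr (⊤ : Subgroup G) = ⊤) := by
  have main : ∀ (H : Subgroup G) (p : GammaSDP n v π),
      p ∈ coordCopy n v π x₀ ⊔ Subgroup.map SemidirectProduct.inr H ↔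
        (p.right ∈ H ∧ ∀ i : Fin v, (¬ ∃ h ∈ H, π h x₀ = i) →
          Multiplicative.toAdd (p.left i) = 0) := by
    intro H p
    constructor
    · intro hp
      have hle : coordCopy n v π x₀ ⊔ Subgroup.map SemidirectProduct.inr H ≤
          orbitSupp n v π x₀ H := by
        refine sup_le ?_ ?_
        · rintro q ⟨hq1, hq2⟩
          refine ⟨hq1 ▸ H.one_mem, fun i hi => ?_⟩
          exact hq2 i (fun h => hi ⟨1, H.one_mem, by simp [h]⟩)
        · rintro q ⟨g, hg, rfl⟩
          exact ⟨by simpa using hg, fun i _ => by simp⟩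
      exact hle hp
    · rintro ⟨hr, hw⟩
      have hdecomp : p = SemidirectProduct.inl p.left * SemidirectProduct.inr p.right :=
        (SemidirectProduct.inl_left_mul_inr_right p).symm
      rw [hdecomp]
      refine mul_mem ?_ (Subgroup.mem_sup_right ⟨p.right, hr, rfl⟩)
      have hprod : p.left = ∏ i : Fin v, Pi.mulSingle i (p.left i) :=
        (Finset.univ_prod_mulSingle _).symm
      have single_mem : ∀ i : Fin v,
          (SemidirectProduct.inl (Pi.mulSingle i (p.left i)) : GammaSDP n v π) ∈
            coordCopy n v π x₀ ⊔ Subgroup.map SemidirectProduct.inr H := by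
        intro i
        by_cases hi : ∃ h ∈ H, π h x₀ = i
        · obtain ⟨h, hh, hπ⟩ := hi
          have key : (SemidirectProduct.inl (Pi.mulSingle i (p.left i)) : GammaSDP n v π) =
              SemidirectProduct.inr h * SemidirectProduct.inl (Pi.mulSingle x₀ (p.left i)) *
                SemidirectProduct.inr h⁻¹ := by
            rw [← SemidirectProduct.inl_aut]
            congr 1
            funext j
            have hrfl : (((permPi v (Multiplicative (ZMod n))).comp π) h)
                (Pi.mulSingle x₀ (p.left i)) j
                = (Pi.mulSingle x₀ (p.left i) : Fin v → Multiplicative (ZMod n))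
                    ((π h)⁻¹ j) := rfl
            rw [hrfl]
            have hiff : (π h)⁻¹ j = x₀ ↔ j = i := by
              rw [← hπ, Equiv.Perm.inv_def, Equiv.symm_apply_eq]
            simp only [Pi.mulSingle_apply, hiff]
          rw [key]
          refine mul_mem (mul_mem (Subgroup.mem_sup_right ⟨h, hh, rfl⟩)
            (Subgroup.mem_sup_left ?_)) (Subgroup.mem_sup_right ⟨h⁻¹, H.inv_mem hh, rfl⟩)
          exact ⟨rfl, fun j hj => by simp [Pi.mulSingle_apply, hj]⟩
        · have h1 : p.left i = 1 := by
            have := hw i hi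
            rwa [show (0 : ZMod n) = Multiplicative.toAdd (1 : Multiplicative (ZMod n)) from rfl,
              Multiplicative.toAdd.injective.eq_iff] at this
          simp only [h1]
          have : (SemidirectProduct.inl (Pi.mulSingle i (1 : Multiplicative (ZMod n))) : GammaSDP n v π) = 1 := by
            rw [Pi.mulSingle_one, map_one]
          rw [this]; exact one_mem _
      have key : ∀ s : Finset (Fin v),
          (SemidirectProduct.inl (∏ i ∈ s, Pi.mulSingle i (p.left i)) : GammaSDP n v π) ∈
            coordCopy n v π x₀ ⊔ Subgroup.map SemidirectProduct.inr H := by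
        intro s
        induction s using Finset.induction with
        | empty => rw [Finset.prod_empty, map_one]; exact one_mem _
        | insert _ _ hx ih =>
          rw [Finset.prod_insert hx, map_mul]
          exact mul_mem (single_mem _) ih
      rw [hprod]
      exact key Finset.univ
  refine ⟨main H, fun htrans => ?_⟩
  rw [eq_top_iff]
  intro p _
  rw [main ⊤ p]
  refine ⟨trivial, fun i hi => absurd ?_ hi⟩
  obtain ⟨g, hg⟩ := htrans x₀ i
  exact ⟨g, trivial, hg⟩

end
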